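/- Let k : ℝ → ℝ be continuous and strictly concave with k(0) < 0 and k(λ) ≤ −γλ² + βλ + M for all λ, where γ > 0. Set c* := min_{λ>0} (−k(λ)/λ). Then for c < c* the equation k(λ) + cλ = 0 has no solution λ > 0; for c = c* it has exactly one solution λ* > 0; and for c > c* it has exactly two solutions 0 < λ_c⁻ < λ_c⁺. -/

import Mathlib

/-- A strictly concave function cannot have three distinct zeros (shifted by `c * l`). -/
lemma three_roots_aux (k : ℝ → ℝ) (hconc : StrictConcaveOn ℝ Set.univ k) (c a b d : ℝ)
    (hab : a < b) (hbd : b < d) (ha : k a + c * a = 0) (hb : k b + c * b = 0)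
    (hd : k d + c * d = 0) : False := by
  have hda : (0:ℝ) < d - a := by linarith
  set t := (d - b) / (d - a) with ht_def
  set s := (b - a) / (d - a) with hs_def
  have ht : 0 < t := div_pos (by linarith) hda
  have hs : 0 < s := div_pos (by linarith) hda
  have hts : t + s = 1 := by
    rw [ht_def, hs_def, ← add_div]
    field_simp
    ring
  have hcomb : t * a + s * d = b := by
    rw [ht_def, hs_def]
    field_simp
    ring
  have h := hconc.2 (Set.mem_univ a) (Set.mem_univ d) (ne_of_lt (by linarith)) ht hs hts
  simp only [smul_eq_mul] at h
  rw [hcomb] at h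
  have e1 : t * (k a + c * a) = 0 := by rw [ha]; ring
  have e2 : s * (k d + c * d) = 0 := by rw [hd]; ring
  have e3 : c * (t * a + s * d) = c * b := by rw [hcomb]
  nlinarith [h, e1, e2, e3, hb]

/-- Midpoint of two distinct zeros has strictly positive value. -/
lemma mid_pos_aux (k : ℝ → ℝ) (hconc : StrictConcaveOn ℝ Set.univ k) (c a b : ℝ)
    (hab : a ≠ b) (ha : k a + c * a = 0) (hb : k b + c * b = 0) :
    0 < k ((a + b) / 2) + c * ((a + b) / 2) := by
  have h := hconc.2 (Set.mem_univ a) (Set.mem_univ b) hab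
    (by norm_num : (0:ℝ) < 1/2) (by norm_num : (0:ℝ) < 1/2) (by norm_num)
  simp only [smul_eq_mul] at h
  have hmid : (1/2 : ℝ) * a + 1/2 * b = (a + b) / 2 := by ring
  rw [hmid] at h
  nlinarith [h, ha, hb]

/-- Trichotomy for the roots of the characteristic equation `k λ + c λ = 0`, `λ > 0`,
where `cstar = min_{λ>0} (−k λ / λ)` (attained at `l0 > 0`). -/
theorem stmt_3 (k : ℝ → ℝ) (hcont : Continuous k)
    (hconc : StrictConcaveOn ℝ Set.univ k) (hk0 : k 0 < 0)
    (γ β M : ℝ) (hγ : 0 < γ) (hbound : ∀ l : ℝ, k l ≤ -γ * l ^ 2 + β * l + M)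
    (cstar : ℝ) (l0 : ℝ) (hl0 : 0 < l0) (hmin : cstar = -k l0 / l0)
    (hlow : ∀ μ : ℝ, 0 < μ → cstar ≤ -k μ / μ) :
    (∀ c : ℝ, c < cstar → ¬ ∃ l : ℝ, 0 < l ∧ k l + c * l = 0) ∧
    (∃! l : ℝ, 0 < l ∧ k l + cstar * l = 0) ∧
    (∀ c : ℝ, cstar < c → ∃ lm lp : ℝ, 0 < lm ∧ lm < lp ∧
      ∀ l : ℝ, 0 < l → (k l + c * l = 0 ↔ l = lm ∨ l = lp)) := by
  have hkl0 : k l0 + cstar * l0 = 0 := by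
    have : cstar * l0 = -k l0 := by
      rw [hmin]; field_simp
    linarith
  refine ⟨?_, ?_, ?_⟩
  · -- no root for c < cstar
    rintro c hc ⟨l, hl, hroot⟩
    have : cstar ≤ -k l / l := hlow l hl
    have hcl : c = -k l / l := by
      field_simp
      linarith
    rw [← hcl] at this
    linarith
  · -- unique root at c = cstar
    refine ⟨l0, ⟨hl0, hkl0⟩, ?_⟩
    rintro y ⟨hy, hroot⟩
    by_contra hne
    set m := (y + l0) / 2 with hm_def
    have hmpos : 0 < m := by rw [hm_def]; linarith
    have hpos := mid_pos_aux k hconc cstar y l0 hne hroot hkl0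
    have hle := hlow m hmpos
    rw [← hm_def] at hpos
    have hlt : -k m / m < cstar := by
      rw [div_lt_iff₀ hmpos]; linarith
    linarith
  · -- two roots for c > cstar
    intro c hc
    have hf : Continuous fun l => k l + c * l := by continuity
    have hfl0 : 0 < k l0 + c * l0 := by nlinarith [hkl0]
    -- lower root
    have h1 : (0:ℝ) ∈ Set.Ioo (k 0 + c * 0) (k l0 + c * l0) := by
      constructor
      · simpa using hk0
      · exact hfl0
    obtain ⟨lm, hlm_mem, hflm⟩ := intermediate_value_Ioo (le_of_lt hl0) hf.continuousOn h1
    -- upper bound point R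
    set R : ℝ := max (l0 + 1) ((|β + c| + |M| + 1) / γ) with hR_def
    have hR1 : l0 + 1 ≤ R := le_max_left _ _
    have hR2 : (|β + c| + |M| + 1) / γ ≤ R := le_max_right _ _
    have hRge1 : (1:ℝ) ≤ R := by linarith [hl0]
    have hRγ : |β + c| + |M| + 1 ≤ γ * R := by
      rw [div_le_iff₀ hγ] at hR2; linarith [hR2]
    have hfR : k R + c * R < 0 := by
      have hb := hbound R
      have h1 : β + c ≤ |β + c| := le_abs_self _
      have h2 : M ≤ |M| := le_abs_self _
      nlinarith [hb, hRγ, hRge1, abs_nonneg (β + c), abs_nonneg M]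
    have h2 : (0:ℝ) ∈ Set.Ioo (k R + c * R) (k l0 + c * l0) := ⟨hfR, hfl0⟩
    obtain ⟨lp, hlp_mem, hflp⟩ := intermediate_value_Ioo' (by linarith : l0 ≤ R)
      hf.continuousOn h2
    refine ⟨lm, lp, hlm_mem.1, lt_trans hlm_mem.2 hlp_mem.1, ?_⟩
    intro l hl
    constructor
    · intro hroot
      by_contra hcon
      push_neg at hcon
      obtain ⟨hne1, hne2⟩ := hcon
      rcases lt_trichotomy l lm with h | h | h
      · exact three_roots_aux k hconc c l lm lp h (lt_trans hlm_mem.2 hlp_mem.1) hroot hflm hflp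
      · exact hne1 h
      · rcases lt_trichotomy l lp with h' | h' | h'
        · exact three_roots_aux k hconc c lm l lp h h' hflm hroot hflp
        · exact hne2 h'
        · exact three_roots_aux k hconc c lm lp l (lt_trans hlm_mem.2 hlp_mem.1) h' hflm hflp hroot
    · rintro (rfl | rfl)
      · exact hflm
      · exact hflp
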